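/- arXiv:2109.11931 — 3 statements merged into one kernel-verified Lean document; each statement's English description precedes it below -/
import Mathlib

section
/- In d = 9, the function f₀(ρ) = (1-ρ²)/(7+5ρ²)³ satisfies on (0,1) the ODE (1-ρ²)f'' + (8/ρ − 2(λ+3)ρ)f' − ((λ+2)(λ+3) − V(ρ))f = 0 with λ = 1, where V(ρ) = 480(7-ρ²)/(7+5ρ²)². -/
lemma den_ne (ρ : ℝ) : (7 + 5 * ρ ^ 2) ≠ 0 := by positivity

lemma first_deriv (f : ℝ → ℝ)
    (hf : ∀ ρ : ℝ, f ρ = (1 - ρ ^ 2) / (7 + 5 * ρ ^ 2) ^ 3) (ρ : ℝ) :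
    HasDerivAt f ((20 * ρ ^ 3 - 44 * ρ) / (7 + 5 * ρ ^ 2) ^ 4) ρ := by
  have hfe : f = fun ρ => (1 - ρ ^ 2) / (7 + 5 * ρ ^ 2) ^ 3 := funext hf
  rw [hfe]
  have h1 : HasDerivAt (fun ρ : ℝ => 1 - ρ ^ 2) (-(2 * ρ)) ρ := by
    simpa using ((hasDerivAt_pow 2 ρ).const_sub 1)
  have h2 : HasDerivAt (fun ρ : ℝ => (7 + 5 * ρ ^ 2) ^ 3)
      (3 * (7 + 5 * ρ ^ 2) ^ 2 * (5 * (2 * ρ))) ρ := by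
    have : HasDerivAt (fun ρ : ℝ => 7 + 5 * ρ ^ 2) (5 * (2 * ρ)) ρ := by
      simpa using ((hasDerivAt_pow 2 ρ).const_mul 5).const_add 7
    simpa [mul_comm] using (this.fun_pow 3)
  have := h1.fun_div h2 (pow_ne_zero 3 (den_ne ρ))
  refine this.congr_deriv ?_
  have hD := den_ne ρ
  rw [div_eq_div_iff (by positivity) (by positivity)]
  ring

lemma second_deriv (f : ℝ → ℝ)
    (hf : ∀ ρ : ℝ, f ρ = (1 - ρ ^ 2) / (7 + 5 * ρ ^ 2) ^ 3) (ρ : ℝ) :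
    HasDerivAt (deriv f)
      ((-500 * ρ ^ 4 + 1960 * ρ ^ 2 - 308) / (7 + 5 * ρ ^ 2) ^ 5) ρ := by
  have hdf : deriv f = fun ρ => (20 * ρ ^ 3 - 44 * ρ) / (7 + 5 * ρ ^ 2) ^ 4 :=
    funext fun ρ => (first_deriv f hf ρ).deriv
  rw [hdf]
  have h1 : HasDerivAt (fun ρ : ℝ => 20 * ρ ^ 3 - 44 * ρ)
      (20 * (3 * ρ ^ 2) - 44) ρ := by
    have a := (hasDerivAt_pow 3 ρ).const_mul 20
    have b := (hasDerivAt_id ρ).const_mul 44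
    simpa [mul_comm] using a.fun_sub b
  have h2 : HasDerivAt (fun ρ : ℝ => (7 + 5 * ρ ^ 2) ^ 4)
      (4 * (7 + 5 * ρ ^ 2) ^ 3 * (5 * (2 * ρ))) ρ := by
    have : HasDerivAt (fun ρ : ℝ => 7 + 5 * ρ ^ 2) (5 * (2 * ρ)) ρ := by
      simpa using ((hasDerivAt_pow 2 ρ).const_mul 5).const_add 7
    simpa [mul_comm] using (this.fun_pow 4)
  have := h1.fun_div h2 (pow_ne_zero 4 (den_ne ρ))
  refine this.congr_deriv ?_
  have hD := den_ne ρ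
  rw [div_eq_div_iff (by positivity) (by positivity)]
  ring

/-- In `d = 9`, `f₀(ρ) = (1-ρ²)/(7+5ρ²)³` solves the `ℓ = 0` spectral ODE
with `λ = 1` and potential `V(ρ) = 480(7-ρ²)/(7+5ρ²)²` on `(0,1)`. -/
theorem spectral_ode_l0_lam1
    (f V : ℝ → ℝ)
    (hf : ∀ ρ : ℝ, f ρ = (1 - ρ ^ 2) / (7 + 5 * ρ ^ 2) ^ 3)
    (hV : ∀ ρ : ℝ, V ρ = 480 * (7 - ρ ^ 2) / (7 + 5 * ρ ^ 2) ^ 2)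
    (lam : ℝ) (hlam : lam = 1) :
    ∀ ρ ∈ Set.Ioo (0 : ℝ) 1,
      (1 - ρ ^ 2) * deriv (deriv f) ρ
        + (8 / ρ - 2 * (lam + 3) * ρ) * deriv f ρ
        - ((lam + 2) * (lam + 3) - V ρ) * f ρ = 0 := by
  intro ρ hρ
  have hρ0 : ρ ≠ 0 := ne_of_gt hρ.1
  have hD := den_ne ρ
  rw [(first_deriv f hf ρ).deriv, (second_deriv f hf ρ).deriv, hf, hV, hlam]
  field_simp
  ring
end

section
/- In d = 9, the function f₁(ρ) = ρ(7-3ρ²)/(7+5ρ²)³ satisfies on (0,1) the ODE (1-ρ²)f'' + (8/ρ − 2(λ+3)ρ)f' − ((λ+2)(λ+3) + 8/ρ² − V(ρ))f = 0 with λ = 0, where V(ρ) = 480(7-ρ²)/(7+5ρ²)². -/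
private lemma Dpos (ρ : ℝ) : (0:ℝ) < 7 + 5 * ρ ^ 2 := by positivity

private lemma hasDerivAt_f (f : ℝ → ℝ)
    (hf : ∀ ρ : ℝ, f ρ = ρ * (7 - 3 * ρ ^ 2) / (7 + 5 * ρ ^ 2) ^ 3) (ρ : ℝ) :
    HasDerivAt f ((49 - 238 * ρ ^ 2 + 45 * ρ ^ 4) / (7 + 5 * ρ ^ 2) ^ 4) ρ := by
  have hD : (7 + 5 * ρ ^ 2) ^ 3 ≠ 0 := by positivity
  have hN : HasDerivAt (fun x : ℝ => x * (7 - 3 * x ^ 2))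
      (1 * (7 - 3 * ρ ^ 2) + ρ * (-(3 * (2 * ρ ^ 1)))) ρ :=
    (hasDerivAt_id ρ).mul (((hasDerivAt_pow 2 ρ).const_mul 3).const_sub 7)
  have hDd : HasDerivAt (fun x : ℝ => (7 + 5 * x ^ 2) ^ 3)
      (3 * (7 + 5 * ρ ^ 2) ^ 2 * (5 * (2 * ρ ^ 1))) ρ := by
    have : HasDerivAt (fun x : ℝ => 7 + 5 * x ^ 2) (5 * (2 * ρ ^ 1)) ρ :=
      ((hasDerivAt_pow 2 ρ).const_mul 5).const_add 7
    simpa using this.fun_pow 3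
  have := hN.fun_div hDd hD
  have heq : f = fun x => x * (7 - 3 * x ^ 2) / (7 + 5 * x ^ 2) ^ 3 := funext hf
  rw [heq]
  refine this.congr_deriv ?_
  have hD0 : (7 + 5 * ρ ^ 2) ≠ 0 := by positivity
  field_simp
  ring

private lemma hasDerivAt_f' (ρ : ℝ) :
    HasDerivAt (fun x : ℝ => (49 - 238 * x ^ 2 + 45 * x ^ 4) / (7 + 5 * x ^ 2) ^ 4)
      ((-5292 * ρ + 8400 * ρ ^ 3 - 900 * ρ ^ 5) / (7 + 5 * ρ ^ 2) ^ 5) ρ := by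
  have hD : (7 + 5 * ρ ^ 2) ^ 4 ≠ 0 := by positivity
  have hN : HasDerivAt (fun x : ℝ => 49 - 238 * x ^ 2 + 45 * x ^ 4)
      (-(238 * (2 * ρ ^ 1)) + 45 * (4 * ρ ^ 3)) ρ :=
    (((hasDerivAt_pow 2 ρ).const_mul 238).const_sub 49).add ((hasDerivAt_pow 4 ρ).const_mul 45)
  have hDd : HasDerivAt (fun x : ℝ => (7 + 5 * x ^ 2) ^ 4)
      (4 * (7 + 5 * ρ ^ 2) ^ 3 * (5 * (2 * ρ ^ 1))) ρ := by
    have : HasDerivAt (fun x : ℝ => 7 + 5 * x ^ 2) (5 * (2 * ρ ^ 1)) ρ :=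
      ((hasDerivAt_pow 2 ρ).const_mul 5).const_add 7
    simpa using this.fun_pow 4
  have := hN.fun_div hDd hD
  refine this.congr_deriv ?_
  have hD0 : (7 + 5 * ρ ^ 2) ≠ 0 := by positivity
  field_simp
  ring

/-- In `d = 9`, `f₁(ρ) = ρ(7-3ρ²)/(7+5ρ²)³` solves the `ℓ = 1` spectral ODE
(with centrifugal term `8/ρ²`) with `λ = 0` and potential
`V(ρ) = 480(7-ρ²)/(7+5ρ²)²` on `(0,1)`. -/
theorem spectral_ode_l1_lam0
    (f V : ℝ → ℝ)
    (hf : ∀ ρ : ℝ, f ρ = ρ * (7 - 3 * ρ ^ 2) / (7 + 5 * ρ ^ 2) ^ 3)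
    (hV : ∀ ρ : ℝ, V ρ = 480 * (7 - ρ ^ 2) / (7 + 5 * ρ ^ 2) ^ 2)
    (lam : ℝ) (hlam : lam = 0) :
    ∀ ρ ∈ Set.Ioo (0 : ℝ) 1,
      (1 - ρ ^ 2) * deriv (deriv f) ρ
        + (8 / ρ - 2 * (lam + 3) * ρ) * deriv f ρ
        - ((lam + 2) * (lam + 3) + 8 / ρ ^ 2 - V ρ) * f ρ = 0 := by
  intro ρ hρ
  have hderiv : deriv f = fun x => (49 - 238 * x ^ 2 + 45 * x ^ 4) / (7 + 5 * x ^ 2) ^ 4 :=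
    funext fun x => (hasDerivAt_f f hf x).deriv
  have h2 : deriv (deriv f) ρ = (-5292 * ρ + 8400 * ρ ^ 3 - 900 * ρ ^ 5) / (7 + 5 * ρ ^ 2) ^ 5 := by
    rw [hderiv]; exact (hasDerivAt_f' ρ).deriv
  rw [h2, hderiv, hf, hV, hlam]
  have hρ0 : ρ ≠ 0 := ne_of_gt hρ.1
  have hD0 : (7 + 5 * ρ ^ 2) ≠ 0 := by positivity
  field_simp
  ring
end

section
/- In d = 9, the function f₁(ρ) = ρ(77-5ρ²)/(7+5ρ²)³ satisfies on (0,1) the ODE (1-ρ²)f'' + (8/ρ − 2(λ+3)ρ)f' − ((λ+2)(λ+3) + 8/ρ² − V(ρ))f = 0 with λ = 1, where V(ρ) = 480(7-ρ²)/(7+5ρ²)². -/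
/-- In `d = 9`, `f₁(ρ) = ρ(77-5ρ²)/(7+5ρ²)³` solves the `ℓ = 1` spectral ODE
(with centrifugal term `8/ρ²`) with `λ = 1` and potential
`V(ρ) = 480(7-ρ²)/(7+5ρ²)²` on `(0,1)`. -/
theorem spectral_ode_l1_lam1
    (f V : ℝ → ℝ)
    (hf : ∀ ρ : ℝ, f ρ = ρ * (77 - 5 * ρ ^ 2) / (7 + 5 * ρ ^ 2) ^ 3)
    (hV : ∀ ρ : ℝ, V ρ = 480 * (7 - ρ ^ 2) / (7 + 5 * ρ ^ 2) ^ 2)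
    (lam : ℝ) (hlam : lam = 1) :
    ∀ ρ ∈ Set.Ioo (0 : ℝ) 1,
      (1 - ρ ^ 2) * deriv (deriv f) ρ
        + (8 / ρ - 2 * (lam + 3) * ρ) * deriv f ρ
        - ((lam + 2) * (lam + 3) + 8 / ρ ^ 2 - V ρ) * f ρ = 0 := by
  have hden : ∀ ρ : ℝ, (7 + 5 * ρ ^ 2) ≠ 0 := fun ρ => by positivity
  have hf' : ∀ ρ : ℝ, HasDerivAt f
      ((539 - 2030 * ρ ^ 2 + 75 * ρ ^ 4) / (7 + 5 * ρ ^ 2) ^ 4) ρ := by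
    intro ρ
    have h1 : HasDerivAt (fun x : ℝ => x * (77 - 5 * x ^ 2))
        (1 * (77 - 5 * ρ ^ 2) + ρ * (-(5 * (2 * ρ ^ 1)))) ρ :=
      (hasDerivAt_id ρ).mul (((hasDerivAt_pow 2 ρ).const_mul 5).const_sub 77)
    have h2 : HasDerivAt (fun x : ℝ => (7 + 5 * x ^ 2) ^ 3)
        (3 * (7 + 5 * ρ ^ 2) ^ 2 * (5 * (2 * ρ ^ 1))) ρ :=
      (((hasDerivAt_pow 2 ρ).const_mul 5).const_add 7).pow 3
    have h3 := h1.div h2 (by positivity)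
    have heq : f = fun x : ℝ => x * (77 - 5 * x ^ 2) / (7 + 5 * x ^ 2) ^ 3 :=
      funext hf
    rw [heq]
    convert h3 using 1
    have h4 : (7 + 5 * ρ ^ 2) ≠ 0 := hden ρ
    case e'_4 => rfl
    case e'_5 => rfl
    case e'_8 => rfl
    field_simp
    ring
  have hf'' : ∀ ρ : ℝ, HasDerivAt (deriv f)
      ((-49980 * ρ + 63000 * ρ ^ 3 - 1500 * ρ ^ 5) / (7 + 5 * ρ ^ 2) ^ 5) ρ := by
    intro ρ
    have heq : deriv f = fun x : ℝ =>
        (539 - 2030 * x ^ 2 + 75 * x ^ 4) / (7 + 5 * x ^ 2) ^ 4 :=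
      funext fun x => (hf' x).deriv
    rw [heq]
    have h1 : HasDerivAt (fun x : ℝ => 539 - 2030 * x ^ 2 + 75 * x ^ 4)
        (-(2030 * (2 * ρ ^ 1)) + 75 * (4 * ρ ^ 3)) ρ :=
      (((hasDerivAt_pow 2 ρ).const_mul 2030).const_sub 539).add
        ((hasDerivAt_pow 4 ρ).const_mul 75)
    have h2 : HasDerivAt (fun x : ℝ => (7 + 5 * x ^ 2) ^ 4)
        (4 * (7 + 5 * ρ ^ 2) ^ 3 * (5 * (2 * ρ ^ 1))) ρ :=
      (((hasDerivAt_pow 2 ρ).const_mul 5).const_add 7).pow 4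
    have h3 := h1.div h2 (by positivity)
    convert h3 using 1
    have h4 : (7 + 5 * ρ ^ 2) ≠ 0 := hden ρ
    case e'_4 => rfl
    case e'_5 => rfl
    case e'_8 => rfl
    field_simp
    ring
  intro ρ hρ
  have hρ0 : ρ ≠ 0 := ne_of_gt hρ.1
  have h4 : (7 + 5 * ρ ^ 2) ≠ 0 := hden ρ
  rw [(hf' ρ).deriv, (hf'' ρ).deriv, hf, hV, hlam]
  field_simp
  ring
end
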